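/- The family d_t of Lie algebra structures on ℂ³ with brackets [w₁,w₃] = w₁ + t w₂, [w₂,w₃] = w₂ is a jump deformation: d₀ = d₂ and for every t ≠ 0, d_t is isomorphic to d₂(1:1) (with [w₁,w₃] = w₁ + w₂, [w₂,w₃] = w₂), which is not isomorphic to d₂. -/
import Mathlib


/- STATEMENT 13: The family `d_t` on `ℂ³` with `[w₁,w₃] = w₁ + t w₂`, `[w₂,w₃] = w₂`
is a jump deformation: `d₀ = d₂` (with `[w₁,w₃] = w₁`, `[w₂,w₃] = w₂`), and for every
`t ≠ 0`, `d_t` is isomorphic to `d₂(1:1)` (with `[w₁,w₃] = w₁ + w₂`, `[w₂,w₃] = w₂`),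
which is not isomorphic to `d₂`. -/

/-- The deformed bracket `d_t`: `[w₁,w₃] = w₁ + t w₂`, `[w₂,w₃] = w₂`. -/
def dt (t : ℂ) (x y : Fin 3 → ℂ) : Fin 3 → ℂ :=
  ![x 0 * y 2 - x 2 * y 0,
    t * (x 0 * y 2 - x 2 * y 0) + (x 1 * y 2 - x 2 * y 1),
    0]

/-- The bracket of `d₂`: `[w₁,w₃] = w₁`, `[w₂,w₃] = w₂`. -/
def d2diag (x y : Fin 3 → ℂ) : Fin 3 → ℂ :=
  ![x 0 * y 2 - x 2 * y 0, x 1 * y 2 - x 2 * y 1, 0]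

/-- The bracket of `d₂(1:1)`: `[w₁,w₃] = w₁ + w₂`, `[w₂,w₃] = w₂`. -/
def d211 (x y : Fin 3 → ℂ) : Fin 3 → ℂ :=
  ![x 0 * y 2 - x 2 * y 0,
    (x 0 * y 2 - x 2 * y 0) + (x 1 * y 2 - x 2 * y 1),
    0]

def sc (t : ℂ) : (Fin 3 → ℂ) →ₗ[ℂ] (Fin 3 → ℂ) where
  toFun x := ![t * x 0, x 1, x 2]
  map_add' x y := by funext i; fin_cases i <;> simp <;> ring
  map_smul' c x := by funext i; fin_cases i <;> simp <;> ring

noncomputable def gE (t : ℂ) (ht : t ≠ 0) : (Fin 3 → ℂ) ≃ₗ[ℂ] (Fin 3 → ℂ) :=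
  LinearEquiv.ofLinear (sc t) (sc t⁻¹)
    (by ext x i; fin_cases i <;> simp [sc] <;> field_simp)
    (by ext x i; fin_cases i <;> simp [sc] <;> field_simp)

theorem dt_is_jump_deformation :
    (∀ x y, dt 0 x y = d2diag x y)
    ∧ (∀ t : ℂ, t ≠ 0 →
        ∃ g : (Fin 3 → ℂ) ≃ₗ[ℂ] (Fin 3 → ℂ),
          ∀ x y, g (dt t x y) = d211 (g x) (g y))
    ∧ ¬ ∃ g : (Fin 3 → ℂ) ≃ₗ[ℂ] (Fin 3 → ℂ),
        ∀ x y, g (d211 x y) = d2diag (g x) (g y) := by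
  refine ⟨?_, ?_, ?_⟩
  · intro x y; funext i; fin_cases i <;> simp [dt, d2diag]
  · intro t ht
    refine ⟨gE t ht, fun x y => ?_⟩
    funext i
    fin_cases i <;> simp [gE, sc, dt, d211] <;> ring
  · rintro ⟨g, h⟩
    set a := g ![1,0,0] with ha
    set b := g ![0,1,0] with hb
    set c := g ![0,0,1] with hc
    have h2 : b = d2diag b c := by
      have := h ![0,1,0] ![0,0,1]
      have e : d211 ![0,1,0] ![0,0,1] = ![0,1,0] := by
        funext i; fin_cases i <;> simp [d211]
      rw [e] at this
      exact this
    have hsum : (![1,1,0] : Fin 3 → ℂ) = ![1,0,0] + ![0,1,0] := by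
      funext i; fin_cases i <;> simp
    have h1 : a + b = d2diag a c := by
      have := h ![1,0,0] ![0,0,1]
      have e : d211 ![1,0,0] ![0,0,1] = ![1,1,0] := by
        funext i; fin_cases i <;> simp [d211]
      rw [e, hsum, map_add] at this
      exact this
    -- component equations
    have hb0 : b 0 = b 0 * c 2 - b 2 * c 0 := congrFun h2 0
    have hb1 : b 1 = b 1 * c 2 - b 2 * c 1 := congrFun h2 1
    have hb2 : b 2 = 0 := congrFun h2 2
    have ha0 : a 0 + b 0 = a 0 * c 2 - a 2 * c 0 := congrFun h1 0
    have ha1 : a 1 + b 1 = a 1 * c 2 - a 2 * c 1 := congrFun h1 1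
    have ha2 : a 2 + b 2 = 0 := congrFun h1 2
    have hA2 : a 2 = 0 := by rw [hb2] at ha2; simpa using ha2
    rw [hb2] at hb0 hb1
    rw [hA2] at ha0 ha1
    simp at hb0 hb1 ha0 ha1
    -- hb0 : b 0 = b 0 * c 2, ha0 : a 0 + b 0 = a 0 * c 2
    have hb0' : b 0 = 0 := by
      by_contra hne
      have hc2 : c 2 = 1 := by
        have : b 0 * c 2 = b 0 * 1 := by linear_combination -hb0
        exact (mul_left_cancel₀ hne this)
      rw [hc2] at ha0
      simp at ha0
      exact hne ha0
    have hb1' : b 1 = 0 := by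
      by_contra hne
      have hc2 : c 2 = 1 := by
        have : b 1 * c 2 = b 1 * 1 := by linear_combination -hb1
        exact (mul_left_cancel₀ hne this)
      rw [hc2] at ha1
      simp at ha1
      exact hne ha1
    have hbz : b = 0 := by
      funext i; fin_cases i <;> simp [hb0', hb1', hb2]
    have : (![0,1,0] : Fin 3 → ℂ) = 0 := by
      have := g.injective (hbz.trans (g.map_zero).symm)
      exact this
    have := congrFun this 1
    simp at this
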